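/- Work in the Euclidean plane ℝ². Fix real numbers a < b and radii r₁, r₂ > 0 with b − a > r₁ + r₂, and let D₁ and D₂ be the closed disks of radius r₁ and r₂ centered at c₁ = (a,0) and c₂ = (b,0) respectively. Let T be the common internal tangent of D₁ and D₂ that is above D₁ and below D₂, given as the graph of an affine function t. Let u = (x_u, y_u) be a point with x_u > b, y_u < 0, and y_u < t(x_u) (i.e., u lies strictly below T). Then there is no line in ℝ² that intersects D₁, intersects D₂, and passes through u. -/

import Mathlib

/-- Distance from a point on the x-axis to the line `y = m x + k`, as a lower bound
coming from `infDist`: the foot of the perpendicular witnesses `infDist ≤ |e|/√(1+m²)`. -/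
private lemma tangent_bound (m k x₀ r : ℝ) (P : EuclideanSpace ℝ (Fin 2))
    (T : Set (EuclideanSpace ℝ (Fin 2)))
    (hT : T = {Q : EuclideanSpace ℝ (Fin 2) | Q 1 = m * Q 0 + k})
    (hP0 : P 0 = x₀) (hP1 : P 1 = 0)
    (htan : Metric.infDist P T = r) :
    r * Real.sqrt (1 + m^2) ≤ |m * x₀ + k| := by
  set e : ℝ := m * x₀ + k with he
  have hm2 : (0:ℝ) < 1 + m^2 := by positivity
  set F : EuclideanSpace ℝ (Fin 2) :=
    (WithLp.equiv 2 (Fin 2 → ℝ)).symm ![x₀ - m * e / (1 + m^2), e / (1 + m^2)] with hF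
  have hFT : F ∈ T := by
    rw [hT]
    show F 1 = m * F 0 + k
    simp only [hF, WithLp.equiv_symm_apply, PiLp.toLp_apply, Matrix.cons_val_one, Matrix.head_cons,
      Matrix.cons_val_zero]
    field_simp
    ring
  have hr0 : 0 ≤ r := htan ▸ Metric.infDist_nonneg
  have hle : r ≤ Real.sqrt ((m * e / (1 + m^2))^2 + (e / (1 + m^2))^2) := by
    rw [← htan]
    refine le_trans (Metric.infDist_le_dist_of_mem hFT) ?_
    rw [EuclideanSpace.dist_eq]
    apply le_of_eq
    congr 1
    rw [Fin.sum_univ_two]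
    simp only [hF, WithLp.equiv_symm_apply, PiLp.toLp_apply, Matrix.cons_val_one, Matrix.head_cons,
      Matrix.cons_val_zero, Real.dist_eq, hP0, hP1]
    rw [sq_abs, sq_abs]
    ring
  have hsq : r^2 * (1 + m^2) ≤ e^2 := by
    have h1 : r^2 ≤ (m * e / (1 + m^2))^2 + (e / (1 + m^2))^2 := by
      nlinarith [Real.sq_sqrt (show (0:ℝ) ≤ (m * e / (1 + m^2))^2 + (e / (1 + m^2))^2 by positivity),
        Real.sqrt_nonneg ((m * e / (1 + m^2))^2 + (e / (1 + m^2))^2)]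
    have h0 : (m * e / (1 + m^2))^2 + (e / (1 + m^2))^2 = e^2 / (1 + m^2) := by
      field_simp
      ring
    rw [h0] at h1
    rw [le_div_iff₀ hm2] at h1
    exact h1
  have hs : Real.sqrt (1 + m^2) ^ 2 = 1 + m^2 := Real.sq_sqrt hm2.le
  nlinarith [abs_nonneg e, sq_abs e, mul_nonneg hr0 (Real.sqrt_nonneg (1 + m^2)),
    sq_nonneg (r * Real.sqrt (1+m^2) - |e|), sq_nonneg (r * Real.sqrt (1+m^2) + |e|)]

private lemma ball_coords (x0 r : ℝ) (cc q : EuclideanSpace ℝ (Fin 2))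
    (hcc : cc = (WithLp.equiv 2 (Fin 2 → ℝ)).symm ![x0, 0])
    (h : q ∈ Metric.closedBall cc r) :
    (q 0 - x0)^2 + (q 1)^2 ≤ r^2 := by
  rw [Metric.mem_closedBall, EuclideanSpace.dist_eq, Fin.sum_univ_two, hcc] at h
  simp only [WithLp.equiv_symm_apply, PiLp.toLp_apply, Matrix.cons_val_zero, Matrix.cons_val_one,
    Matrix.head_cons, Real.dist_eq, sub_zero] at h
  have hS : (0:ℝ) ≤ |q 0 - x0|^2 + |q 1|^2 := by positivity
  have h2 := Real.sq_sqrt hS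
  have h3 : |q 0 - x0|^2 + |q 1|^2 ≤ r^2 := by
    nlinarith [Real.sqrt_nonneg (|q 0 - x0|^2 + |q 1|^2)]
  rwa [sq_abs, sq_abs] at h3

private lemma cross_bound (A B dx dy r : ℝ) (h : A^2 + B^2 ≤ r^2) :
    (B*dx - A*dy)^2 ≤ r^2*(dx^2+dy^2) := by
  nlinarith [sq_nonneg (A*dx + B*dy),
    mul_le_mul_of_nonneg_right h (show (0:ℝ) ≤ dx^2+dy^2 by positivity)]

private lemma dy_bound (r₁ r₂ m c B dx dy s₁ s₂ : ℝ) (hr₁ : 0<r₁) (hr₂ : 0<r₂) (hB : 0 < B)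
    (hc : c^2 = 1+m^2) (hc1 : 1 ≤ c) (hsum : (r₁+r₂)*c ≤ -(m*B))
    (h1 : s₁^2 ≤ r₁^2*(dx^2+dy^2)) (h2 : s₂^2 ≤ r₂^2*(dx^2+dy^2))
    (hdiff : s₁ - s₂ = -(B*dy)) :
    dy^2 ≤ m^2*dx^2 := by
  have hD : (0:ℝ) ≤ dx^2+dy^2 := by positivity
  have step1 : -(s₁*s₂) ≤ r₁*r₂*(dx^2+dy^2) := by
    nlinarith [sq_nonneg (r₂*s₁ + r₁*s₂), mul_le_mul_of_nonneg_left h1 (sq_nonneg r₂),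
      mul_le_mul_of_nonneg_left h2 (sq_nonneg r₁), mul_pos hr₁ hr₂]
  have step2 : B^2*dy^2 ≤ (r₁+r₂)^2 * (dx^2+dy^2) := by
    have hq : (s₁ - s₂)^2 = B^2*dy^2 := by rw [hdiff]; ring
    nlinarith [hq]
  have step3 : (r₁+r₂)^2*c^2 ≤ m^2*B^2 := by
    nlinarith [mul_pos (add_pos hr₁ hr₂) (lt_of_lt_of_le one_pos hc1)]
  have step4 : B^2*(c^2*dy^2) ≤ B^2*(m^2*(dx^2+dy^2)) := by
    nlinarith [mul_le_mul_of_nonneg_right step3 hD,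
      mul_le_mul_of_nonneg_left step2 (show (0:ℝ) ≤ c^2 by positivity)]
  have step5 : c^2*dy^2 ≤ m^2*(dx^2+dy^2) :=
    le_of_mul_le_mul_left (by nlinarith) (by positivity : (0:ℝ) < B^2)
  nlinarith [step5]

private lemma key_contra (m k c r₂ b xu yu dx dy : ℝ)
    (hc : c^2 = 1 + m^2) (hc1 : 1 ≤ c) (hm : m < 0) (hr₂ : 0 < r₂)
    (h2 : r₂ * c ≤ -(m*b+k)) (hux : b < xu) (huT : yu < m*xu + k)
    (hdy : dy^2 ≤ m^2*dx^2) (hdx : 0 < dx)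
    (hs₂ : ((b - xu)*dy + yu*dx)^2 ≤ r₂^2*(dx^2+dy^2)) : False := by
  have hmdx : m * dx < 0 := mul_neg_of_neg_of_pos hm hdx
  have hmd : m * dx ≤ dy := by
    by_contra h
    push_neg at h
    nlinarith [mul_pos (show (0:ℝ) < m*dx - dy by linarith)
      (show (0:ℝ) < -(dy + m*dx) by nlinarith)]
  have hs2lt : (b - xu)*dy + yu*dx < -(r₂*c)*dx := by
    nlinarith [mul_lt_mul_of_pos_right huT hdx,
      mul_le_mul_of_nonpos_left hmd (show b - xu ≤ 0 by linarith),
      mul_le_mul_of_nonneg_right h2 hdx.le]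
  have hcpos : (0:ℝ) < c := lt_of_lt_of_le one_pos hc1
  have hP : 0 < r₂ * c * dx := by positivity
  nlinarith [mul_pos (show 0 < -((b - xu)*dy + yu*dx) - r₂*c*dx by linarith)
    (show 0 < -((b - xu)*dy + yu*dx) + r₂*c*dx by linarith),
    mul_le_mul_of_nonneg_left hdy (sq_nonneg r₂), sq_nonneg dx]

set_option maxHeartbeats 1000000 in
/-- Lemma 1 of the paper: if `u` lies strictly below the common internal tangent `T`
of the two disks (the tangent that is above `D₁` and below `D₂`), to the right of `D₂`
and below the `x`-axis, then no line passes through both disks and `u`. -/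
theorem no_line_through_disks_and_point_below_tangent
    (a b r₁ r₂ m k : ℝ) (hab : a < b) (hr₁ : 0 < r₁) (hr₂ : 0 < r₂)
    (hsep : r₁ + r₂ < b - a)
    (c₁ c₂ u : EuclideanSpace ℝ (Fin 2))
    (hc₁ : c₁ = (WithLp.equiv 2 (Fin 2 → ℝ)).symm ![a, 0])
    (hc₂ : c₂ = (WithLp.equiv 2 (Fin 2 → ℝ)).symm ![b, 0])
    (T : Set (EuclideanSpace ℝ (Fin 2)))
    (hT : T = {P : EuclideanSpace ℝ (Fin 2) | P 1 = m * P 0 + k})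
    (htan₁ : Metric.infDist c₁ T = r₁)
    (htan₂ : Metric.infDist c₂ T = r₂)
    (hbelow : c₁ 1 < m * c₁ 0 + k)
    (habove : m * c₂ 0 + k < c₂ 1)
    (hux : b < u 0) (huy : u 1 < 0)
    (huT : u 1 < m * u 0 + k) :
    ¬ ∃ (p d : EuclideanSpace ℝ (Fin 2)) (t₁ t₂ t₃ : ℝ), d ≠ 0 ∧
        p + t₁ • d ∈ Metric.closedBall c₁ r₁ ∧
        p + t₂ • d ∈ Metric.closedBall c₂ r₂ ∧
        p + t₃ • d = u := by
  rintro ⟨p, d, t₁, t₂, t₃, hd, hq₁, hq₂, hq₃⟩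
  have hbelow' : (0:ℝ) < m * a + k := by rw [hc₁] at hbelow; simpa using hbelow
  have habove' : m * b + k < 0 := by rw [hc₂] at habove; simpa using habove
  set c := Real.sqrt (1 + m^2) with hcdef
  have hcsq : c^2 = 1 + m^2 := Real.sq_sqrt (by positivity)
  have hc1 : 1 ≤ c := by nlinarith [Real.sqrt_nonneg (1 + m^2)]
  have ht1 : r₁ * c ≤ m * a + k := by
    have := tangent_bound m k a r₁ c₁ T hT (by rw [hc₁]; simp) (by rw [hc₁]; simp) htan₁
    rwa [abs_of_pos hbelow'] at this
  have ht2 : r₂ * c ≤ -(m * b + k) := by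
    have := tangent_bound m k b r₂ c₂ T hT (by rw [hc₂]; simp) (by rw [hc₂]; simp) htan₂
    rwa [abs_of_neg habove'] at this
  have hm : m < 0 := by nlinarith
  have hu0 : u 0 = p 0 + t₃ * d 0 := by
    have := congrArg (fun v : EuclideanSpace ℝ (Fin 2) => v 0) hq₃
    simp at this; linarith [this]
  have hu1 : u 1 = p 1 + t₃ * d 1 := by
    have := congrArg (fun v : EuclideanSpace ℝ (Fin 2) => v 1) hq₃
    simp at this; linarith [this]
  -- coordinate forms of the two disk conditions
  have hb₁ := ball_coords a r₁ c₁ _ hc₁ hq₁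
  have hb₂ := ball_coords b r₂ c₂ _ hc₂ hq₂
  have hap₁0 : (p + t₁ • d) 0 = p 0 + t₁ * d 0 := by simp
  have hap₁1 : (p + t₁ • d) 1 = p 1 + t₁ * d 1 := by simp
  have hap₂0 : (p + t₂ • d) 0 = p 0 + t₂ * d 0 := by simp
  have hap₂1 : (p + t₂ • d) 1 = p 1 + t₂ * d 1 := by simp
  rw [hap₁0, hap₁1] at hb₁
  rw [hap₂0, hap₂1] at hb₂
  -- cross-product (distance-to-line-through-u) bounds
  have hs₁ : ((a - u 0)*(d 1) + (u 1)*(d 0))^2 ≤ r₁^2*((d 0)^2+(d 1)^2) := by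
    have := cross_bound (p 0 + t₁ * d 0 - a) (p 1 + t₁ * d 1) (d 0) (d 1) r₁ hb₁
    have heq : (p 1 + t₁ * d 1)*(d 0) - (p 0 + t₁ * d 0 - a)*(d 1)
        = (a - u 0)*(d 1) + (u 1)*(d 0) := by rw [hu0, hu1]; ring
    rwa [heq] at this
  have hs₂ : ((b - u 0)*(d 1) + (u 1)*(d 0))^2 ≤ r₂^2*((d 0)^2+(d 1)^2) := by
    have := cross_bound (p 0 + t₂ * d 0 - b) (p 1 + t₂ * d 1) (d 0) (d 1) r₂ hb₂
    have heq : (p 1 + t₂ * d 1)*(d 0) - (p 0 + t₂ * d 0 - b)*(d 1)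
        = (b - u 0)*(d 1) + (u 1)*(d 0) := by rw [hu0, hu1]; ring
    rwa [heq] at this
  -- the direction is shallow
  have hsum : (r₁+r₂)*c ≤ -(m*(b-a)) := by linarith [ht1, ht2]
  have hdy2 : (d 1)^2 ≤ m^2*(d 0)^2 :=
    dy_bound r₁ r₂ m c (b - a) (d 0) (d 1) ((a - u 0)*(d 1) + (u 1)*(d 0))
      ((b - u 0)*(d 1) + (u 1)*(d 0)) hr₁ hr₂ (by linarith) hcsq hc1 hsum hs₁ hs₂ (by ring)
  -- the horizontal component is nonzero
  have hdx0 : d 0 ≠ 0 := by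
    intro h0
    apply hd
    have h1 : d 1 = 0 := by
      have h2 : (d 1)^2 ≤ 0 := by rw [h0] at hdy2; simpa using hdy2
      exact pow_eq_zero_iff two_ne_zero |>.mp (le_antisymm h2 (sq_nonneg _))
    ext i
    fin_cases i
    · simpa using h0
    · simpa using h1
  rcases hdx0.lt_or_gt with hneg | hpos
  · exact key_contra m k c r₂ b (u 0) (u 1) (-(d 0)) (-(d 1)) hcsq hc1 hm hr₂ ht2 hux huT
      (by nlinarith) (by linarith) (by nlinarith)
  · exact key_contra m k c r₂ b (u 0) (u 1) (d 0) (d 1) hcsq hc1 hm hr₂ ht2 hux huT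
      hdy2 hpos hs₂
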